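/- Monotonicity of lower-abstraction values under giving choice to the minimizer: Let (G, u) be a finite concurrent two-player zero-sum game and Π a compatible partition with lower abstraction (G↓, u↓). Then for every strategy of player 1 in G↓ obtained by following a player-1 strategy of G through corresponding histories, the guaranteed value in G↓ is at most the guaranteed value of the original strategy in G; consequently υ_{2L}(G↓, u↓) ≤ υ_L(G, u). -/

import Mathlib

open scoped BigOperators

/-- A finite concurrent two-player game structure `(S, s0, A, Γ1, Γ2, δ)`. -/
structure ConcGame where
  S : Type
  A : Type
  [fS : Fintype S]
  [dS : DecidableEq S]
  [fA : Fintype A]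
  [dA : DecidableEq A]
  s0 : S
  act1 : S → Finset A
  act2 : S → Finset A
  h1 : ∀ s, (act1 s).Nonempty
  h2 : ∀ s, (act2 s).Nonempty
  tr : S → A → A → S

attribute [instance] ConcGame.fS ConcGame.dS ConcGame.fA ConcGame.dA

/-- A history: a finite sequence of (state, action pair) tuples. -/
abbrev Hist (G : ConcGame) := List (G.S × G.A × G.A)

/-- Mixed (history-dependent) strategies for available-action map `act`:
after every history and at every state, a probability distribution
supported on the available actions. -/
def Strat (G : ConcGame) (act : G.S → Finset G.A) : Set (Hist G → G.S → G.A → ℝ) :=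
  {σ | ∀ h s, (∀ a, 0 ≤ σ h s a) ∧ (∑ a ∈ act s, σ h s a = 1) ∧
        ∀ a ∉ act s, σ h s a = 0}

/-- Expected cumulative `L`-step utility of the mixed strategy profile `(σ1, σ2)`
starting at state `s` with current history `h`. -/
noncomputable def expVal (G : ConcGame) (u : G.S → ℝ)
    (σ1 σ2 : Hist G → G.S → G.A → ℝ) : ℕ → G.S → Hist G → ℝ
  | 0, _, _ => 0
  | (L + 1), s, h =>
      u s + ∑ a1 ∈ G.act1 s, ∑ a2 ∈ G.act2 s,
        σ1 h s a1 * σ2 h s a2 *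
          expVal G u σ1 σ2 L (G.tr s a1 a2) (h ++ [(s, a1, a2)])

/-- The `L`-step finite-horizon value of the game started at state `s`:
`sup` over player-1 mixed strategies of `inf` over player-2 mixed strategies
of the expected cumulative utility. -/
noncomputable def valFrom (G : ConcGame) (u : G.S → ℝ) (L : ℕ) (s : G.S) : ℝ :=
  ⨆ σ1 : Strat G G.act1, ⨅ σ2 : Strat G G.act2, expVal G u σ1.1 σ2.1 L s []

/-- The `L`-step finite-horizon value `υ_L(G, u)` of the game. -/
noncomputable def gval (G : ConcGame) (u : G.S → ℝ) (L : ℕ) : ℝ :=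
  valFrom G u L G.s0

/-- The partition induced by a setoid is compatible with the game's action sets:
equivalent states have identical available-action sets for both players. -/
def Compatible (G : ConcGame) (r : Setoid G.S) : Prop :=
  ∀ s s', r.r s s' → G.act1 s = G.act1 s' ∧ G.act2 s = G.act2 s'

section Abstraction

open Classical

variable (G : ConcGame) (r : Setoid G.S)

/-- The partition class (as a set of original states) of an abstract state `q`. -/
def classOf (q : Quotient r) : Set G.S := {s | Quotient.mk r s = q}

/-- State space of the abstracted games: partition classes plus dummy states
`(class, action, action)`. -/
abbrev AbsS := Quotient r ⊕ (Quotient r × G.A × G.A)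

/-- Action space of the abstracted games: original actions, plus choices of a
successor class at dummy states. -/
abbrev AbsA := G.A ⊕ Quotient r

/-- The finset of successor classes reachable from some state of class `π`
under the action pair `(a1, a2)` (the set `X_d` for dummy state `d = (π,a1,a2)`). -/
noncomputable def succClasses (π : Quotient r) (a1 a2 : G.A) : Finset (Quotient r) :=
  letI : DecidableEq (Quotient r) := Classical.decEq _
  letI : Fintype (Quotient r) := Fintype.ofFinite _
  (Finset.univ.filter (fun s => Quotient.mk r s = π)).image
    (fun s => Quotient.mk r (G.tr s a1 a2))

lemma succClasses_nonempty (π : Quotient r) (a1 a2 : G.A) :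
    (succClasses G r π a1 a2).Nonempty := by
  classical
  refine ⟨Quotient.mk r (G.tr (Quotient.out π) a1 a2), ?_⟩
  unfold succClasses
  simp only [Finset.mem_image, Finset.mem_filter, Finset.mem_univ, true_and]
  exact ⟨Quotient.out π, Quotient.out_eq π, rfl⟩

/-- The lower abstraction `G↓` of `G` with respect to the partition induced by `r`:
transitions from a class go to the corresponding dummy state, and at dummy states
player 2 (the minimizer) alone chooses the successor class. -/
noncomputable def lowerAbs : ConcGame :=
  letI : DecidableEq (Quotient r) := Classical.decEq _
  letI : Fintype (Quotient r) := Fintype.ofFinite _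
  { S := AbsS G r
    A := AbsA G r
    s0 := Sum.inl (Quotient.mk r G.s0)
    act1 := fun s => match s with
      | Sum.inl q => (G.act1 (Quotient.out q)).image Sum.inl
      | Sum.inr d => {Sum.inr d.1}
    act2 := fun s => match s with
      | Sum.inl q => (G.act2 (Quotient.out q)).image Sum.inl
      | Sum.inr d => (succClasses G r d.1 d.2.1 d.2.2).image Sum.inr
    h1 := by
      rintro (q | d)
      · exact (G.h1 _).image _
      · exact Finset.singleton_nonempty _
    h2 := by
      rintro (q | d)
      · exact (G.h2 _).image _
      · exact (succClasses_nonempty G r d.1 d.2.1 d.2.2).image _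
    tr := fun s a1 a2 => match s, a1, a2 with
      | Sum.inl q, Sum.inl b1, Sum.inl b2 => Sum.inr (q, b1, b2)
      | Sum.inl q, _, _ => Sum.inl q
      | Sum.inr d, _, Sum.inr π' => Sum.inl π'
      | Sum.inr d, _, _ => Sum.inl d.1 }

/-- The upper abstraction `G↑` of `G` with respect to the partition induced by `r`:
transitions from a class go to the corresponding dummy state, and at dummy states
player 1 (the maximizer) alone chooses the successor class. -/
noncomputable def upperAbs : ConcGame :=
  letI : DecidableEq (Quotient r) := Classical.decEq _
  letI : Fintype (Quotient r) := Fintype.ofFinite _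
  { S := AbsS G r
    A := AbsA G r
    s0 := Sum.inl (Quotient.mk r G.s0)
    act1 := fun s => match s with
      | Sum.inl q => (G.act1 (Quotient.out q)).image Sum.inl
      | Sum.inr d => (succClasses G r d.1 d.2.1 d.2.2).image Sum.inr
    act2 := fun s => match s with
      | Sum.inl q => (G.act2 (Quotient.out q)).image Sum.inl
      | Sum.inr d => {Sum.inr d.1}
    h1 := by
      rintro (q | d)
      · exact (G.h1 _).image _
      · exact (succClasses_nonempty G r d.1 d.2.1 d.2.2).image _
    h2 := by
      rintro (q | d)
      · exact (G.h2 _).image _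
      · exact Finset.singleton_nonempty _
    tr := fun s a1 a2 => match s, a1, a2 with
      | Sum.inl q, Sum.inl b1, Sum.inl b2 => Sum.inr (q, b1, b2)
      | Sum.inl q, _, _ => Sum.inl q
      | Sum.inr d, Sum.inr π', _ => Sum.inl π'
      | Sum.inr d, _, _ => Sum.inl d.1 }

/-- Lower abstract utility: minimum of `u` over the class, `0` at dummy states. -/
noncomputable def lowerU (u : G.S → ℝ) : AbsS G r → ℝ
  | Sum.inl q => sInf (u '' classOf G r q)
  | Sum.inr _ => 0

/-- Upper abstract utility: maximum of `u` over the class, `0` at dummy states. -/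
noncomputable def upperU (u : G.S → ℝ) : AbsS G r → ℝ
  | Sum.inl q => sSup (u '' classOf G r q)
  | Sum.inr _ => 0

end Abstraction

section Aux
open Classical
variable (G : ConcGame) (r : Setoid G.S)

lemma act1_inl (q : Quotient r) : (lowerAbs G r).act1 (Sum.inl q) = (G.act1 q.out).image Sum.inl := by
  ext b; simp [lowerAbs]; exact Iff.of_eq (by congr <;> exact Subsingleton.elim _ _)
lemma act2_inl (q : Quotient r) : (lowerAbs G r).act2 (Sum.inl q) = (G.act2 q.out).image Sum.inl := by
  ext b; simp [lowerAbs]; exact Iff.of_eq (by congr <;> exact Subsingleton.elim _ _)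
lemma act1_inr (d : Quotient r × G.A × G.A) : (lowerAbs G r).act1 (Sum.inr d) = {Sum.inr d.1} := rfl
lemma act2_inr (d : Quotient r × G.A × G.A) : (lowerAbs G r).act2 (Sum.inr d) = (succClasses G r d.1 d.2.1 d.2.2).image Sum.inr := by
  ext b; simp [lowerAbs]; exact Iff.of_eq (by congr <;> exact Subsingleton.elim _ _)
lemma tr_inl (q : Quotient r) (a1 a2 : G.A) :
    (lowerAbs G r).tr (Sum.inl q) (Sum.inl a1) (Sum.inl a2) = Sum.inr (q, a1, a2) := rfl
lemma tr_inr (d : Quotient r × G.A × G.A) (c1 : AbsA G r) (π : Quotient r) :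
    (lowerAbs G r).tr (Sum.inr d) c1 (Sum.inr π) = Sum.inl π := by cases c1 <;> rfl

lemma sum_image_inl (t : Finset G.A) (f : (lowerAbs G r).A → ℝ) :
    ∑ b ∈ t.image (Sum.inl : G.A → (lowerAbs G r).A), f b = ∑ a ∈ t, f (Sum.inl a) :=
  Finset.sum_image (fun x _ y _ h => Sum.inl.inj h)

lemma sum_image_inr (t : Finset (Quotient r)) (f : (lowerAbs G r).A → ℝ) :
    ∑ b ∈ t.image (Sum.inr : Quotient r → (lowerAbs G r).A), f b = ∑ π ∈ t, f (Sum.inr π) :=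
  Finset.sum_image (fun x _ y _ h => Sum.inr.inj h)

lemma act_eq_of_mk_eq (hc : Compatible G r) {s s' : G.S} (h : Quotient.mk r s = Quotient.mk r s') :
    G.act1 s = G.act1 s' ∧ G.act2 s = G.act2 s' := hc s s' (Quotient.exact h)

/-- a history is a genuine run from `s` ending at `t` -/
def GenH : Hist G → G.S → G.S → Prop
  | [], s, t => t = s
  | p :: rest, s, t => p.1 = s ∧ GenH rest (G.tr s p.2.1 p.2.2) t

lemma GenH_append {s t : G.S} {h : Hist G} (hg : GenH G h s t) (a1 a2 : G.A) :
    GenH G (h ++ [(t, a1, a2)]) s (G.tr t a1 a2) := by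
  induction h generalizing s with
  | nil => simp only [GenH] at hg; subst hg; exact ⟨rfl, rfl⟩
  | cons p rest ih => exact ⟨hg.1, ih hg.2⟩

/-- lift a concrete history to the corresponding abstract history -/
def liftH : Hist G → Hist (lowerAbs G r)
  | [] => []
  | (s, a1, a2) :: rest =>
      (Sum.inl (Quotient.mk r s), Sum.inl a1, Sum.inl a2) ::
      (Sum.inr (Quotient.mk r s, a1, a2), Sum.inr (Quotient.mk r s),
        Sum.inr (Quotient.mk r (G.tr s a1 a2))) :: liftH rest

lemma liftH_append (h : Hist G) (s : G.S) (a1 a2 : G.A) :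
    liftH G r (h ++ [(s, a1, a2)]) = liftH G r h ++
      ([(Sum.inl (Quotient.mk r s), Sum.inl a1, Sum.inl a2),
       (Sum.inr (Quotient.mk r s, a1, a2), Sum.inr (Quotient.mk r s),
        Sum.inr (Quotient.mk r (G.tr s a1 a2)))] : Hist (lowerAbs G r)) := by
  induction h with
  | nil => rfl
  | cons p rest ih => obtain ⟨s', a1', a2'⟩ := p; simp [liftH, ih]

/-- track the concrete state along an abstract history -/
def trackSt : G.S → Hist (lowerAbs G r) → G.S
  | s, [] => s
  | s, [_] => s
  | s, x :: _ :: rest =>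
      match x.2.1, x.2.2 with
      | Sum.inl a1, Sum.inl a2 => trackSt (G.tr s a1 a2) rest
      | _, _ => s

/-- track the concrete history along an abstract history -/
def trackH : G.S → Hist (lowerAbs G r) → Hist G
  | _, [] => []
  | _, [_] => []
  | s, x :: _ :: rest =>
      match x.2.1, x.2.2 with
      | Sum.inl a1, Sum.inl a2 => (s, a1, a2) :: trackH (G.tr s a1 a2) rest
      | _, _ => []

lemma trackSt_liftH {s t : G.S} {h : Hist G} (hg : GenH G h s t) (l : Hist (lowerAbs G r)) :
    trackSt G r s (liftH G r h ++ l) = trackSt G r t l := by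
  induction h generalizing s with
  | nil => simp only [GenH] at hg; subst hg; rfl
  | cons p rest ih =>
      obtain ⟨s', a1, a2⟩ := p
      obtain ⟨rfl, hg2⟩ := hg
      simpa [liftH, trackSt] using ih hg2

lemma trackH_liftH {s t : G.S} {h : Hist G} (hg : GenH G h s t) (l : Hist (lowerAbs G r)) :
    trackH G r s (liftH G r h ++ l) = h ++ trackH G r t l := by
  induction h generalizing s with
  | nil => simp only [GenH] at hg; subst hg; rfl
  | cons p rest ih =>
      obtain ⟨s', a1, a2⟩ := p
      obtain ⟨rfl, hg2⟩ := hg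
      simpa [liftH, trackH] using ih hg2
end Aux
section Aux2
open Classical
variable (G : ConcGame) (r : Setoid G.S)

lemma act1_inl_eq (q : Quotient r) :
    (lowerAbs G r).act1 (Sum.inl q)
      = Finset.image (β := (lowerAbs G r).A) Sum.inl (G.act1 q.out) := by
  ext b; simp [lowerAbs]; exact Iff.of_eq (by congr <;> exact Subsingleton.elim _ _)

lemma act2_inl_eq (q : Quotient r) :
    (lowerAbs G r).act2 (Sum.inl q)
      = Finset.image (β := (lowerAbs G r).A) Sum.inl (G.act2 q.out) := by
  ext b; simp [lowerAbs]; exact Iff.of_eq (by congr <;> exact Subsingleton.elim _ _)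

lemma act2_inr_eq (d : Quotient r × G.A × G.A) :
    (lowerAbs G r).act2 (Sum.inr d)
      = Finset.image (β := (lowerAbs G r).A) Sum.inr (succClasses G r d.1 d.2.1 d.2.2) := by
  ext b; simp [lowerAbs]; exact Iff.of_eq (by congr <;> exact Subsingleton.elim _ _)

lemma sum_act1_inl (q : Quotient r) (f : (lowerAbs G r).A → ℝ) :
    ∑ b ∈ (lowerAbs G r).act1 (Sum.inl q), f b = ∑ a ∈ G.act1 q.out, f (Sum.inl a) := by
  rw [act1_inl_eq]
  exact Finset.sum_image fun x _ y _ h => Sum.inl.inj h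

lemma sum_act2_inl (q : Quotient r) (f : (lowerAbs G r).A → ℝ) :
    ∑ b ∈ (lowerAbs G r).act2 (Sum.inl q), f b = ∑ a ∈ G.act2 q.out, f (Sum.inl a) := by
  rw [act2_inl_eq]
  exact Finset.sum_image fun x _ y _ h => Sum.inl.inj h

lemma sum_act1_inr (d : Quotient r × G.A × G.A) (f : (lowerAbs G r).A → ℝ) :
    ∑ b ∈ (lowerAbs G r).act1 (Sum.inr d), f b = f (Sum.inr d.1) := by
  rw [act1_inr]; exact Finset.sum_singleton _ _

lemma sum_act2_inr (d : Quotient r × G.A × G.A) (f : (lowerAbs G r).A → ℝ) :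
    ∑ b ∈ (lowerAbs G r).act2 (Sum.inr d), f b
      = ∑ π ∈ succClasses G r d.1 d.2.1 d.2.2, f (Sum.inr π) := by
  rw [act2_inr_eq]
  exact Finset.sum_image fun x _ y _ h => Sum.inr.inj h

lemma mem_act1_inl {q : Quotient r} {b : (lowerAbs G r).A} :
    b ∈ (lowerAbs G r).act1 (Sum.inl q) ↔ ∃ a ∈ G.act1 q.out, Sum.inl a = b := by
  simp [lowerAbs]; exact @Finset.mem_image _ _ (fun a b => @instDecidableEqSum G.A (Quotient r) G.dA (Classical.decEq (Quotient r)) a b) _ _ _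

lemma mem_act2_inl {q : Quotient r} {b : (lowerAbs G r).A} :
    b ∈ (lowerAbs G r).act2 (Sum.inl q) ↔ ∃ a ∈ G.act2 q.out, Sum.inl a = b := by
  simp [lowerAbs]; exact @Finset.mem_image _ _ (fun a b => @instDecidableEqSum G.A (Quotient r) G.dA (Classical.decEq (Quotient r)) a b) _ _ _

lemma mem_act2_inr {d : Quotient r × G.A × G.A} {b : (lowerAbs G r).A} :
    b ∈ (lowerAbs G r).act2 (Sum.inr d)
      ↔ ∃ π ∈ succClasses G r d.1 d.2.1 d.2.2, Sum.inr π = b := by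
  simp [lowerAbs]; exact @Finset.mem_image _ _ (fun a b => @instDecidableEqSum G.A (Quotient r) G.dA (Classical.decEq (Quotient r)) a b) _ _ _

/-- the induced player-1 strategy in `G` -/
noncomputable def pushStrat1 (σ1' : Hist (lowerAbs G r) → (lowerAbs G r).S → (lowerAbs G r).A → ℝ) :
    Hist G → G.S → G.A → ℝ :=
  fun h s a => σ1' (liftH G r h) (Sum.inl (Quotient.mk r s)) (Sum.inl a)

noncomputable def mimicSt (q : Quotient r) (h' : Hist (lowerAbs G r)) : G.S :=
  if Quotient.mk r (trackSt G r G.s0 h') = q then trackSt G r G.s0 h' else q.out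

lemma mimicSt_mk (q : Quotient r) (h' : Hist (lowerAbs G r)) :
    Quotient.mk r (mimicSt G r q h') = q := by
  unfold mimicSt; split
  · assumption
  · exact Quotient.out_eq q

/-- the mimicking player-2 strategy in `G↓` -/
noncomputable def pushStrat2 (σ2 : Hist G → G.S → G.A → ℝ) :
    Hist (lowerAbs G r) → (lowerAbs G r).S → (lowerAbs G r).A → ℝ :=
  fun h' x b =>
    match x, b with
    | Sum.inl q, Sum.inl a => σ2 (trackH G r G.s0 h') (mimicSt G r q h') a
    | Sum.inl _, Sum.inr _ => 0
    | Sum.inr d, b =>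
        if b = Sum.inr (Quotient.mk r (G.tr (mimicSt G r d.1 h') d.2.1 d.2.2)) then 1 else 0

variable (σ2 : Hist G → G.S → G.A → ℝ)

lemma inr_injEq' (π π' : Quotient r) :
    ((Sum.inr π : (lowerAbs G r).A) = Sum.inr π') ↔ π = π' :=
  ⟨fun h => Sum.inr.inj h, fun h => by rw [h]⟩

lemma pushStrat2_inl_inl (h' : Hist (lowerAbs G r)) (q : Quotient r) (a : G.A) :
    pushStrat2 G r σ2 h' (Sum.inl q) (Sum.inl a)
      = σ2 (trackH G r G.s0 h') (mimicSt G r q h') a := rfl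

lemma pushStrat2_inl_inr (h' : Hist (lowerAbs G r)) (q π : Quotient r) :
    pushStrat2 G r σ2 h' (Sum.inl q) (Sum.inr π) = 0 := rfl

lemma pushStrat2_inr (h' : Hist (lowerAbs G r)) (d : Quotient r × G.A × G.A)
    (b : (lowerAbs G r).A) :
    pushStrat2 G r σ2 h' (Sum.inr d) b
      = if b = Sum.inr (Quotient.mk r (G.tr (mimicSt G r d.1 h') d.2.1 d.2.2)) then 1 else 0 := rfl

lemma pushStrat1_mem (hc : Compatible G r)
    {σ1' : Hist (lowerAbs G r) → (lowerAbs G r).S → (lowerAbs G r).A → ℝ}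
    (hσ : σ1' ∈ Strat (lowerAbs G r) (lowerAbs G r).act1) :
    pushStrat1 G r σ1' ∈ Strat G G.act1 := by
  intro h s
  obtain ⟨hpos, hsum, hout⟩ := hσ (liftH G r h) (Sum.inl (Quotient.mk r s))
  rw [sum_act1_inl] at hsum
  refine ⟨fun a => hpos _, ?_, fun a ha => ?_⟩
  · rw [← (act_eq_of_mk_eq G r hc (Quotient.out_eq (Quotient.mk r s)).symm).1] at hsum
    exact hsum
  · refine hout _ ?_
    refine (mem_act1_inl G r).not.mpr ?_
    rintro ⟨a', ha'mem, hEq⟩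
    cases Sum.inl.inj hEq
    rw [← (act_eq_of_mk_eq G r hc (Quotient.out_eq (Quotient.mk r s)).symm).1] at ha'mem
    exact ha ha'mem

lemma mk_tr_mem_succClasses {s : G.S} {q : Quotient r} (hq : Quotient.mk r s = q) (a1 a2 : G.A) :
    Quotient.mk r (G.tr s a1 a2) ∈ succClasses G r q a1 a2 := by
  unfold succClasses
  simp only [Finset.mem_image, Finset.mem_filter, Finset.mem_univ, true_and]
  exact ⟨s, hq, rfl⟩

lemma pushStrat2_mem (hc : Compatible G r)
    {σ2 : Hist G → G.S → G.A → ℝ} (hσ : σ2 ∈ Strat G G.act2) :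
    pushStrat2 G r σ2 ∈ Strat (lowerAbs G r) (lowerAbs G r).act2 := by
  intro h' x
  match x with
  | Sum.inl q =>
      obtain ⟨hpos, hsum, hout⟩ := hσ (trackH G r G.s0 h') (mimicSt G r q h')
      have hact : G.act2 (mimicSt G r q h') = G.act2 q.out :=
        (act_eq_of_mk_eq G r hc (by rw [mimicSt_mk, Quotient.out_eq])).2
      refine ⟨fun b => ?_, ?_, fun b hb => ?_⟩
      · match b with
        | Sum.inl a => exact hpos a
        | Sum.inr _ => exact le_refl 0
      · rw [sum_act2_inl]
        simp only [pushStrat2_inl_inl]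
        rw [← hact]; exact hsum
      · match b with
        | Sum.inl a =>
            rw [pushStrat2_inl_inl]
            refine hout a ?_
            rw [hact]
            intro hmem
            exact hb ((mem_act2_inl G r).mpr ⟨a, hmem, rfl⟩)
        | Sum.inr _ => exact pushStrat2_inl_inr G r σ2 h' q _
  | Sum.inr d =>
      have hmem : Quotient.mk r (G.tr (mimicSt G r d.1 h') d.2.1 d.2.2)
          ∈ succClasses G r d.1 d.2.1 d.2.2 :=
        mk_tr_mem_succClasses G r (mimicSt_mk G r d.1 h') d.2.1 d.2.2
      refine ⟨fun b => ?_, ?_, fun b hb => ?_⟩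
      · rw [pushStrat2_inr]
        split <;> norm_num
      · rw [sum_act2_inr]
        rw [Finset.sum_congr rfl fun π _ => pushStrat2_inr G r σ2 h' d (Sum.inr π)]
        convert (Finset.sum_congr rfl fun π _ => (if_congr (inr_injEq' G r π _) rfl rfl :
          _ = if π = Quotient.mk r (G.tr (mimicSt G r d.1 h') d.2.1 d.2.2) then (1:ℝ) else 0)).trans
          (by rw [Finset.sum_ite_eq' (succClasses G r d.1 d.2.1 d.2.2) _ (fun _ => (1:ℝ)), if_pos hmem])
        exact Iff.rfl
      · rw [pushStrat2_inr, if_neg]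
        intro hEq
        exact hb ((mem_act2_inr G r).mpr ⟨_, hmem, hEq.symm⟩)

end Aux2
section Aux3
open Classical
variable (G : ConcGame) (r : Setoid G.S)

lemma expVal_succ (H : ConcGame) (v : H.S → ℝ) (a b : Hist H → H.S → H.A → ℝ)
    (m : ℕ) (s : H.S) (h : Hist H) :
    expVal H v a b (m+1) s h = v s + ∑ a1 ∈ H.act1 s, ∑ a2 ∈ H.act2 s,
      a h s a1 * b h s a2 * expVal H v a b m (H.tr s a1 a2) (h ++ [(s, a1, a2)]) := rfl

lemma lowerU_le (u : G.S → ℝ) (s : G.S) :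
    lowerU G r u (Sum.inl (Quotient.mk r s)) ≤ u s := by
  show sInf (u '' classOf G r (Quotient.mk r s)) ≤ u s
  refine csInf_le ((Set.toFinite _).bddBelow) ⟨s, rfl, rfl⟩

lemma key (hc : Compatible G r) (u : G.S → ℝ)
    {σ1' : Hist (lowerAbs G r) → (lowerAbs G r).S → (lowerAbs G r).A → ℝ}
    (h1' : σ1' ∈ Strat (lowerAbs G r) (lowerAbs G r).act1)
    {σ2 : Hist G → G.S → G.A → ℝ} (h2 : σ2 ∈ Strat G G.act2) :
    ∀ (n : ℕ) (h : Hist G) (s : G.S), GenH G h G.s0 s →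
      expVal (lowerAbs G r) (lowerU G r u) σ1' (pushStrat2 G r σ2) (2*n)
        (Sum.inl (Quotient.mk r s)) (liftH G r h)
      ≤ expVal G u (pushStrat1 G r σ1') σ2 n s h := by
  intro n
  induction n with
  | zero => intro h s _; norm_num [expVal]
  | succ n ih =>
      intro h s hg
      have htrS : trackSt G r G.s0 (liftH G r h) = s := by
        simpa [trackSt] using trackSt_liftH G r hg []
      have htrH : trackH G r G.s0 (liftH G r h) = h := by
        simpa [trackH] using trackH_liftH G r hg []
      have hmim0 : mimicSt G r (Quotient.mk r s) (liftH G r h) = s := by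
        unfold mimicSt; rw [htrS, if_pos rfl]
      -- the dummy-step computation
      have hdum : ∀ a1 a2 : G.A,
          expVal (lowerAbs G r) (lowerU G r u) σ1' (pushStrat2 G r σ2) (2*n+1)
            (Sum.inr (Quotient.mk r s, a1, a2))
            (liftH G r h ++ ([(Sum.inl (Quotient.mk r s), Sum.inl a1, Sum.inl a2)] : Hist (lowerAbs G r)))
          = expVal (lowerAbs G r) (lowerU G r u) σ1' (pushStrat2 G r σ2) (2*n)
            (Sum.inl (Quotient.mk r (G.tr s a1 a2))) (liftH G r (h ++ [(s, a1, a2)])) := by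
        intro a1 a2
        have htrS1 : trackSt G r G.s0
            (liftH G r h ++ ([(Sum.inl (Quotient.mk r s), Sum.inl a1, Sum.inl a2)] : Hist (lowerAbs G r))) = s :=
          trackSt_liftH G r hg _
        have hmim1 : mimicSt G r (Quotient.mk r s)
            (liftH G r h ++ ([(Sum.inl (Quotient.mk r s), Sum.inl a1, Sum.inl a2)] : Hist (lowerAbs G r))) = s := by
          unfold mimicSt; rw [htrS1, if_pos rfl]
        have hone : σ1' (liftH G r h ++ ([(Sum.inl (Quotient.mk r s), Sum.inl a1, Sum.inl a2)] : Hist (lowerAbs G r)))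
            (Sum.inr (Quotient.mk r s, a1, a2)) (Sum.inr (Quotient.mk r s)) = 1 := by
          have := (h1' (liftH G r h ++ ([(Sum.inl (Quotient.mk r s), Sum.inl a1, Sum.inl a2)] : Hist (lowerAbs G r)))
            (Sum.inr (Quotient.mk r s, a1, a2))).2.1
          rwa [sum_act1_inr] at this
        have hmem0 : Quotient.mk r (G.tr s a1 a2) ∈ succClasses G r (Quotient.mk r s) a1 a2 :=
          mk_tr_mem_succClasses G r rfl a1 a2
        conv_lhs => erw [expVal_succ]
        rw [sum_act1_inr]
        rw [sum_act2_inr]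
        simp only [pushStrat2_inr, hmim1, hone, one_mul, tr_inr, inr_injEq' G r]
        have hp : ∀ x, pushStrat2 G r σ2 (liftH G r h ++ ([(Sum.inl (Quotient.mk r s), Sum.inl a1, Sum.inl a2)] : Hist (lowerAbs G r)))
            (Sum.inr (Quotient.mk r s, a1, a2)) (Sum.inr x) = if x = Quotient.mk r (G.tr s a1 a2) then 1 else 0 := fun x => by
          erw [pushStrat2_inr, hmim1]; exact if_congr (inr_injEq' G r x _) rfl rfl
        rw [Finset.sum_congr rfl fun x _ => congrArg (· * _) (hp x)]
        simp only [ite_mul, one_mul, zero_mul]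
        rw [Finset.sum_ite_eq' (succClasses G r (Quotient.mk r s) a1 a2)]
        rw [if_pos hmem0]
        show (0:ℝ) + _ = _
        rw [zero_add, liftH_append]
        simp [List.append_assoc]
      conv_lhs => erw [show 2*(n+1) = (2*n+1)+1 by ring, expVal_succ]
      conv_rhs => rw [expVal_succ]
      simp only [sum_act1_inl G r, sum_act2_inl G r, tr_inl, pushStrat2_inl_inl, htrH, hmim0]
      have hact := act_eq_of_mk_eq G r hc (Quotient.out_eq (Quotient.mk r s))
      rw [hact.1, hact.2]
      refine add_le_add (lowerU_le G r u s) (Finset.sum_le_sum fun a1 ha1 => ?_)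
      refine Finset.sum_le_sum fun a2 ha2 => ?_
      rw [hdum a1 a2]
      refine mul_le_mul_of_nonneg_left ?_ ?_
      · exact ih (h ++ [(s, a1, a2)]) (G.tr s a1 a2) (GenH_append G hg a1 a2)
      · exact mul_nonneg ((h1' (liftH G r h) (Sum.inl (Quotient.mk r s))).1 _) ((h2 h s).1 _)

end Aux3
section Aux4
open Classical

noncomputable def unifStrat (G : ConcGame) (act : G.S → Finset G.A) : Hist G → G.S → G.A → ℝ :=
  fun _ s a => if a ∈ act s then ((act s).card : ℝ)⁻¹ else 0

lemma unifStrat_mem (G : ConcGame) (act : G.S → Finset G.A) (hne : ∀ s, (act s).Nonempty) :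
    unifStrat G act ∈ Strat G act := by
  intro h s
  refine ⟨fun a => ?_, ?_, fun a ha => if_neg ha⟩
  · unfold unifStrat; split
    · positivity
    · exact le_refl 0
  · unfold unifStrat
    rw [Finset.sum_ite_of_true (fun a ha => ha), Finset.sum_const, nsmul_eq_mul,
      mul_inv_cancel₀]
    exact_mod_cast Finset.card_ne_zero_of_mem (hne s).choose_spec

instance stratNonempty1 (G : ConcGame) : Nonempty (Strat G G.act1) :=
  ⟨⟨unifStrat G G.act1, unifStrat_mem G G.act1 G.h1⟩⟩

instance stratNonempty2 (G : ConcGame) : Nonempty (Strat G G.act2) :=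
  ⟨⟨unifStrat G G.act2, unifStrat_mem G G.act2 G.h2⟩⟩

lemma expVal_abs_le (H : ConcGame) (v : H.S → ℝ) (C : ℝ)
    (hC : ∀ s, |v s| ≤ C)
    {σ1 σ2 : Hist H → H.S → H.A → ℝ}
    (h1 : σ1 ∈ Strat H H.act1) (h2 : σ2 ∈ Strat H H.act2) :
    ∀ (n : ℕ) (s : H.S) (h : Hist H), |expVal H v σ1 σ2 n s h| ≤ n * C := by
  have hC0 : 0 ≤ C := le_trans (abs_nonneg _) (hC H.s0)
  intro n
  induction n with
  | zero => intro s h; simp [expVal]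
  | succ n ih =>
      intro s h
      have hkey : ∀ a1 ∈ H.act1 s, ∀ a2 ∈ H.act2 s,
          |σ1 h s a1 * σ2 h s a2 * expVal H v σ1 σ2 n (H.tr s a1 a2) (h ++ [(s, a1, a2)])|
            ≤ σ1 h s a1 * σ2 h s a2 * (n * C) := by
        intro a1 _ a2 _
        rw [abs_mul, abs_mul, abs_of_nonneg ((h1 h s).1 a1), abs_of_nonneg ((h2 h s).1 a2)]
        exact mul_le_mul_of_nonneg_left (ih _ _)
          (mul_nonneg ((h1 h s).1 a1) ((h2 h s).1 a2))
      have hsum : ∑ a1 ∈ H.act1 s, ∑ a2 ∈ H.act2 s, σ1 h s a1 * σ2 h s a2 * (n * C)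
          = n * C := by
        have h2' : ∀ a1, ∑ a2 ∈ H.act2 s, σ1 h s a1 * σ2 h s a2 * ((n:ℝ) * C)
            = σ1 h s a1 * ((n:ℝ) * C) := by
          intro a1
          rw [← Finset.sum_mul, ← Finset.mul_sum, (h2 h s).2.1, mul_one]
        rw [Finset.sum_congr rfl fun a1 _ => h2' a1, ← Finset.sum_mul, (h1 h s).2.1, one_mul]
      calc |expVal H v σ1 σ2 (n+1) s h|
          ≤ |v s| + |∑ a1 ∈ H.act1 s, ∑ a2 ∈ H.act2 s,
              σ1 h s a1 * σ2 h s a2 * expVal H v σ1 σ2 n (H.tr s a1 a2) (h ++ [(s, a1, a2)])| := by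
            rw [expVal_succ]; exact abs_add_le _ _
        _ ≤ C + ∑ a1 ∈ H.act1 s, ∑ a2 ∈ H.act2 s, σ1 h s a1 * σ2 h s a2 * (n * C) := by
            refine add_le_add (hC s) ?_
            refine le_trans (Finset.abs_sum_le_sum_abs _ _) ?_
            refine Finset.sum_le_sum fun a1 ha1 => ?_
            refine le_trans (Finset.abs_sum_le_sum_abs _ _) ?_
            exact Finset.sum_le_sum fun a2 ha2 => hkey a1 ha1 a2 ha2
        _ = C + n * C := by rw [hsum]
        _ ≤ (n + 1 : ℕ) * C := by push_cast; nlinarith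

lemma exists_bound (H : ConcGame) (v : H.S → ℝ) : ∃ C, 0 ≤ C ∧ ∀ s, |v s| ≤ C := by
  obtain ⟨C, hC⟩ := (Set.finite_range (fun s => |v s|)).bddAbove
  exact ⟨C, le_trans (abs_nonneg _) (hC ⟨H.s0, rfl⟩), fun s => hC ⟨s, rfl⟩⟩

end Aux4
/-- Monotonicity of lower-abstraction values: every player-1 strategy of the lower
abstraction `G↓` induces (by following it through corresponding histories) a
player-1 strategy of `G` whose guaranteed value is at least the guaranteed value
of the original strategy in `G↓`; consequently `υ_{2L}(G↓,u↓) ≤ υ_L(G,u)`. -/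
theorem lower_abstraction_monotone (G : ConcGame) (u : G.S → ℝ) (r : Setoid G.S)
    (hc : Compatible G r) (L : ℕ) :
    (∀ σ1' : Strat (lowerAbs G r) (lowerAbs G r).act1,
      ∃ σ1 : Strat G G.act1,
        (⨅ σ2' : Strat (lowerAbs G r) (lowerAbs G r).act2,
            expVal (lowerAbs G r) (lowerU G r u) σ1'.1 σ2'.1 (2 * L)
              (lowerAbs G r).s0 [])
          ≤ ⨅ σ2 : Strat G G.act2, expVal G u σ1.1 σ2.1 L G.s0 []) ∧
    gval (lowerAbs G r) (lowerU G r u) (2 * L) ≤ gval G u L := by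
  obtain ⟨C', hC'0, hC'⟩ := exists_bound (lowerAbs G r) (lowerU G r u)
  obtain ⟨C, hC0, hC⟩ := exists_bound G u
  have main : ∀ σ1' : Strat (lowerAbs G r) (lowerAbs G r).act1,
      ∃ σ1 : Strat G G.act1,
        (⨅ σ2' : Strat (lowerAbs G r) (lowerAbs G r).act2,
            expVal (lowerAbs G r) (lowerU G r u) σ1'.1 σ2'.1 (2 * L)
              (lowerAbs G r).s0 [])
          ≤ ⨅ σ2 : Strat G G.act2, expVal G u σ1.1 σ2.1 L G.s0 [] := by
    intro σ1'
    refine ⟨⟨pushStrat1 G r σ1'.1, pushStrat1_mem G r hc σ1'.2⟩, ?_⟩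
    have hbb : BddBelow (Set.range fun σ2' : Strat (lowerAbs G r) (lowerAbs G r).act2 =>
        expVal (lowerAbs G r) (lowerU G r u) σ1'.1 σ2'.1 (2 * L) (lowerAbs G r).s0 []) := by
      refine ⟨-(((2*L : ℕ) : ℝ) * C'), ?_⟩
      rintro x ⟨σ2', rfl⟩
      exact neg_le_of_abs_le
        (expVal_abs_le (lowerAbs G r) (lowerU G r u) C' hC' σ1'.2 σ2'.2 (2*L) _ [])
    refine le_ciInf fun σ2 => ?_
    refine ciInf_le_of_le hbb ⟨pushStrat2 G r σ2.1, pushStrat2_mem G r hc σ2.2⟩ ?_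
    exact key G r hc u σ1'.2 σ2.2 L [] G.s0 rfl
  refine ⟨main, ?_⟩
  have hbbG : ∀ σ1 : Strat G G.act1,
      BddBelow (Set.range fun σ2 : Strat G G.act2 => expVal G u σ1.1 σ2.1 L G.s0 []) := by
    intro σ1
    refine ⟨-(((L : ℕ) : ℝ) * C), ?_⟩
    rintro x ⟨σ2, rfl⟩
    exact neg_le_of_abs_le (expVal_abs_le G u C hC σ1.2 σ2.2 L _ [])
  have hba : BddAbove (Set.range fun σ1 : Strat G G.act1 =>
      ⨅ σ2 : Strat G G.act2, expVal G u σ1.1 σ2.1 L G.s0 []) := by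
    refine ⟨((L : ℕ) : ℝ) * C, ?_⟩
    rintro x ⟨σ1, rfl⟩
    have σ2d : Strat G G.act2 := ⟨unifStrat G G.act2, unifStrat_mem G G.act2 G.h2⟩
    refine ciInf_le_of_le (hbbG σ1) σ2d ?_
    exact le_trans (le_abs_self _) (expVal_abs_le G u C hC σ1.2 σ2d.2 L _ [])
  show (⨆ σ1' : Strat (lowerAbs G r) (lowerAbs G r).act1,
      ⨅ σ2' : Strat (lowerAbs G r) (lowerAbs G r).act2,
        expVal (lowerAbs G r) (lowerU G r u) σ1'.1 σ2'.1 (2*L) (lowerAbs G r).s0 [])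
    ≤ ⨆ σ1 : Strat G G.act1, ⨅ σ2 : Strat G G.act2, expVal G u σ1.1 σ2.1 L G.s0 []
  refine ciSup_le fun σ1' => ?_
  obtain ⟨σ1, hσ1⟩ := main σ1'
  exact le_trans hσ1 (le_ciSup hba σ1)
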